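/- The set {T ∈ Sym_d : T ≻ -I} (equivalently Sym⁺⁺_d - I) is an open convex cone-translate in Sym_d, and the extended exponential map T ↦ (I+T)Σ⁰(I+T) restricted to this set is a bijection onto Sym⁺⁺_d, with inverse Σ ↦ Σ(Σ⁰Σ)^{-1/2} - I. -/

import Mathlib

open Matrix

/-- Congruence of a positive definite real matrix by an invertible matrix. -/
lemma bw_posDef_conj {d : ℕ} {A : Matrix (Fin d) (Fin d) ℝ} (hA : A.PosDef)
    {B : Matrix (Fin d) (Fin d) ℝ} (hB : IsUnit B.det) : (Bᵀ * A * B).PosDef := by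
  have hBT : Bᵀ = Bᴴ := (conjTranspose_eq_transpose_of_trivial B).symm
  refine PosDef.of_dotProduct_mulVec_pos ?_ ?_
  · rw [hBT]
    exact isHermitian_conjTranspose_mul_mul B hA.1
  · intro x hx
    have hBx : B *ᵥ x ≠ 0 := by
      intro h
      apply hx
      have : B⁻¹ *ᵥ (B *ᵥ x) = x := by
        rw [mulVec_mulVec, Matrix.nonsing_inv_mul _ hB, one_mulVec]
      rw [← this, h, mulVec_zero]
    have := hA.dotProduct_mulVec_pos hBx
    rw [hBT]
    simpa only [star_mulVec, dotProduct_mulVec, vecMul_vecMul] using this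

/-- Uniqueness of positive definite square roots. -/
lemma bw_posDef_sq_eq {d : ℕ} {A B : Matrix (Fin d) (Fin d) ℝ} (hA : A.PosDef) (hB : B.PosDef)
    (h : A * A = B * B) : A = B :=
  open MatrixOrder in (CFC.sq_eq_sq_iff A B hA.posSemidef.nonneg hB.posSemidef.nonneg).mp (by rw [pow_two, pow_two, h])

lemma bw_transpose_of_posDef {d : ℕ} {A : Matrix (Fin d) (Fin d) ℝ} (hA : A.PosDef) :
    Aᵀ = A := by
  have := hA.1
  rwa [Matrix.IsHermitian, conjTranspose_eq_transpose_of_trivial] at this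

lemma bw_isOpen_aux {d : ℕ} :
    IsOpen {A : Matrix (Fin d) (Fin d) ℝ |
      ∀ x ∈ Metric.sphere (0 : Fin d → ℝ) 1, 0 < x ⬝ᵥ ((1 + A) *ᵥ x)} := by
  rw [isOpen_iff_mem_nhds]
  intro A hA
  have hcont : Continuous fun z : Matrix (Fin d) (Fin d) ℝ × (Fin d → ℝ) =>
      z.2 ⬝ᵥ ((1 + z.1) *ᵥ z.2) :=
    (continuous_snd).dotProduct ((continuous_const.add continuous_fst).matrix_mulVec
      continuous_snd)
  have := (isCompact_sphere (0 : Fin d → ℝ) 1).eventually_forall_of_forall_eventually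
    (x₀ := A) (P := fun B x => 0 < x ⬝ᵥ ((1 + B) *ᵥ x)) ?_
  · exact this
  · intro y hy
    have h0 : 0 < y ⬝ᵥ ((1 + A) *ᵥ y) := hA y hy
    have := hcont.continuousAt (x := (A, y))
    exact continuousAt_const.eventually_lt this h0 |>.mono (fun z h => h)

lemma bw_posDef_iff_sphere {d : ℕ} {M : Matrix (Fin d) (Fin d) ℝ} (hM : M.IsHermitian) :
    M.PosDef ↔ ∀ x ∈ Metric.sphere (0 : Fin d → ℝ) 1, 0 < x ⬝ᵥ (M *ᵥ x) := by
  constructor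
  · intro h x hx
    rw [mem_sphere_zero_iff_norm] at hx
    have hx0 : x ≠ 0 := by simpa using norm_ne_zero_iff.mp (by rw [hx]; norm_num)
    simpa using h.dotProduct_mulVec_pos hx0
  · intro h
    refine PosDef.of_dotProduct_mulVec_pos hM (fun x hx => ?_)
    have hc : 0 < ‖x‖ := norm_pos_iff.mpr hx
    have hysph : ‖x‖⁻¹ • x ∈ Metric.sphere (0 : Fin d → ℝ) 1 := by
      rw [mem_sphere_zero_iff_norm, norm_smul, norm_inv, norm_norm]
      field_simp
    have hq := h _ hysph
    have hxy : x = ‖x‖ • (‖x‖⁻¹ • x) := (smul_inv_smul₀ hc.ne' x).symm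
    have key : star x ⬝ᵥ (M *ᵥ x) = ‖x‖ * (‖x‖ * ((‖x‖⁻¹ • x) ⬝ᵥ (M *ᵥ (‖x‖⁻¹ • x)))) := by
      rw [star_trivial]
      conv_lhs => rw [hxy]
      rw [smul_dotProduct, mulVec_smul, dotProduct_smul, smul_eq_mul, smul_eq_mul]
    rw [key]
    positivity

lemma bw_isHermitian_of_transpose {d : ℕ} {A : Matrix (Fin d) (Fin d) ℝ} (h : Aᵀ = A) :
    A.IsHermitian := by
  rwa [Matrix.IsHermitian, conjTranspose_eq_transpose_of_trivial]

lemma bw_posDef_convex_aux {d : ℕ} {M N : Matrix (Fin d) (Fin d) ℝ} (hM : M.PosDef)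
    (hN : N.PosDef) {a b : ℝ} (ha : 0 ≤ a) (hb : 0 ≤ b) (hab : a + b = 1) :
    (a • M + b • N).PosDef := by
  refine PosDef.of_dotProduct_mulVec_pos ?_ ?_
  · apply bw_isHermitian_of_transpose
    rw [transpose_add, transpose_smul, transpose_smul,
      bw_transpose_of_posDef hM, bw_transpose_of_posDef hN]
  · intro x hx
    have hMq := hM.dotProduct_mulVec_pos hx
    have hNq := hN.dotProduct_mulVec_pos hx
    rw [star_trivial] at *
    rw [add_mulVec, smul_mulVec, smul_mulVec, dotProduct_add,
      dotProduct_smul, dotProduct_smul, smul_eq_mul, smul_eq_mul]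
    rcases ha.lt_or_eq with ha' | ha'
    · exact add_pos_of_pos_of_nonneg (mul_pos ha' hMq) (mul_nonneg hb hNq.le)
    · have hb1 : b = 1 := by linarith
      simp [← ha', hb1, hNq]

theorem bw_exp_bijection {d : ℕ} (Sig0 R : Matrix (Fin d) (Fin d) ℝ)
    (hSig0 : Sig0.PosDef) (hR : R.PosDef) (hRsq : R * R = Sig0)
    (g : Matrix (Fin d) (Fin d) ℝ → Matrix (Fin d) (Fin d) ℝ)
    (hg : ∀ Sg : Matrix (Fin d) (Fin d) ℝ, Sg.PosDef →
      g Sg * g Sg = Sig0 * Sg ∧ (R⁻¹ * g Sg * R).PosDef) :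
    IsOpen {T : selfAdjoint (Matrix (Fin d) (Fin d) ℝ) |
        (1 + (T : Matrix (Fin d) (Fin d) ℝ)).PosDef} ∧
    Convex ℝ {T : Matrix (Fin d) (Fin d) ℝ | T.IsSymm ∧ (1 + T).PosDef} ∧
    Set.BijOn (fun T => (1 + T) * Sig0 * (1 + T))
      {T : Matrix (Fin d) (Fin d) ℝ | T.IsSymm ∧ (1 + T).PosDef}
      {Sg : Matrix (Fin d) (Fin d) ℝ | Sg.PosDef} ∧
    Set.InvOn (fun Sg => Sg * (g Sg)⁻¹ - 1) (fun T => (1 + T) * Sig0 * (1 + T))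
      {T : Matrix (Fin d) (Fin d) ℝ | T.IsSymm ∧ (1 + T).PosDef}
      {Sg : Matrix (Fin d) (Fin d) ℝ | Sg.PosDef} := by
  have hRdet : IsUnit R.det := hR.det_pos.ne'.isUnit
  have hS0det : IsUnit Sig0.det := hSig0.det_pos.ne'.isUnit
  have hRT : Rᵀ = R := bw_transpose_of_posDef hR
  have hRiT : (R⁻¹)ᵀ = R⁻¹ := by rw [transpose_nonsing_inv, hRT]
  have hRidet : IsUnit (R⁻¹).det := hR.inv.det_pos.ne'.isUnit
  -- uniqueness characterization of g
  have gUnique : ∀ Sg h : Matrix (Fin d) (Fin d) ℝ, Sg.PosDef → h * h = Sig0 * Sg →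
      (R⁻¹ * h * R).PosDef → h = g Sg := by
    intro Sg h hSg hsq hpd
    obtain ⟨hg1, hg2⟩ := hg Sg hSg
    have key : ∀ k : Matrix (Fin d) (Fin d) ℝ, k * k = Sig0 * Sg →
        (R⁻¹ * k * R) * (R⁻¹ * k * R) = R⁻¹ * (Sig0 * Sg) * R := by
      intro k hk
      calc (R⁻¹ * k * R) * (R⁻¹ * k * R) = R⁻¹ * (k * (R * (R⁻¹ * (k * R)))) := by
            simp only [Matrix.mul_assoc]
      _ = R⁻¹ * (k * k) * R := by
            rw [Matrix.mul_nonsing_inv_cancel_left _ _ hRdet]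
            simp only [Matrix.mul_assoc]
      _ = R⁻¹ * (Sig0 * Sg) * R := by rw [hk]
    have heq : R⁻¹ * h * R = R⁻¹ * g Sg * R :=
      bw_posDef_sq_eq hpd hg2 ((key h hsq).trans (key _ hg1).symm)
    have := congrArg (fun X => R * X * R⁻¹) heq
    simpa only [Matrix.mul_assoc, Matrix.mul_nonsing_inv_cancel_left _ _ hRdet,
      Matrix.mul_nonsing_inv _ hRdet, Matrix.mul_one] using this
  -- maps to
  have hmaps : Set.MapsTo (fun T => (1 + T) * Sig0 * (1 + T))
      {T : Matrix (Fin d) (Fin d) ℝ | T.IsSymm ∧ (1 + T).PosDef}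
      {Sg : Matrix (Fin d) (Fin d) ℝ | Sg.PosDef} := by
    intro T ⟨hTs, hTp⟩
    have hPT : (1 + T)ᵀ = 1 + T := by rw [transpose_add, transpose_one, hTs]
    have : ((1 + T)ᵀ * Sig0 * (1 + T)).PosDef := bw_posDef_conj hSig0 hTp.det_pos.ne'.isUnit
    rwa [hPT] at this
  -- the g of the image of T is Sig0 * (1 + T)
  have hgval : ∀ T : Matrix (Fin d) (Fin d) ℝ, T.IsSymm → (1 + T).PosDef →
      g ((1 + T) * Sig0 * (1 + T)) = Sig0 * (1 + T) := by
    intro T hTs hTp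
    refine (gUnique _ _ (hmaps ⟨hTs, hTp⟩) ?_ ?_).symm
    · simp only [Matrix.mul_assoc]
    · have h1 : R⁻¹ * (Sig0 * (1 + T)) * R = Rᵀ * (1 + T) * R := by
        rw [← hRsq, hRT]
        calc R⁻¹ * (R * R * (1 + T)) * R = R⁻¹ * (R * (R * (1 + T))) * R := by
              simp only [Matrix.mul_assoc]
        _ = R * (1 + T) * R := by rw [Matrix.nonsing_inv_mul_cancel_left _ _ hRdet]
      rw [h1]
      exact bw_posDef_conj hTp hRdet
  -- left inverse
  have hleft : Set.LeftInvOn (fun Sg => Sg * (g Sg)⁻¹ - 1)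
      (fun T => (1 + T) * Sig0 * (1 + T))
      {T : Matrix (Fin d) (Fin d) ℝ | T.IsSymm ∧ (1 + T).PosDef} := by
    intro T ⟨hTs, hTp⟩
    simp only
    rw [hgval T hTs hTp, Matrix.mul_inv_rev]
    have hPdet : IsUnit (1 + T).det := hTp.det_pos.ne'.isUnit
    have : (1 + T) * Sig0 * (1 + T) * ((1 + T)⁻¹ * Sig0⁻¹) = 1 + T := by
      calc (1 + T) * Sig0 * (1 + T) * ((1 + T)⁻¹ * Sig0⁻¹)
          = (1 + T) * (Sig0 * ((1 + T) * ((1 + T)⁻¹ * Sig0⁻¹))) := by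
            simp only [Matrix.mul_assoc]
      _ = (1 + T) * (Sig0 * Sig0⁻¹) := by
            rw [Matrix.mul_nonsing_inv_cancel_left _ _ hPdet]
      _ = 1 + T := by rw [Matrix.mul_nonsing_inv _ hS0det, Matrix.mul_one]
    rw [this, add_sub_cancel_left]
  -- right inverse computations
  have main : ∀ Sg : Matrix (Fin d) (Fin d) ℝ, Sg.PosDef →
      (Sg * (g Sg)⁻¹).PosDef ∧ (Sg * (g Sg)⁻¹) * Sig0 * (Sg * (g Sg)⁻¹) = Sg := by
    intro Sg hSg
    obtain ⟨hg1, hg2⟩ := hg Sg hSg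
    have hgdet : IsUnit (g Sg).det := by
      have h2 : (g Sg).det * (g Sg).det = Sig0.det * Sg.det := by
        rw [← det_mul, ← det_mul, hg1]
      have hne : (g Sg).det ≠ 0 := by
        intro h0
        rw [h0, mul_zero] at h2
        exact (mul_pos hSig0.det_pos hSg.det_pos).ne' h2.symm
      exact hne.isUnit
    have hsig : Sg = Sig0⁻¹ * (g Sg * g Sg) := by
      rw [hg1, Matrix.nonsing_inv_mul_cancel_left _ _ hS0det]
    have hP : Sg * (g Sg)⁻¹ = Sig0⁻¹ * g Sg := by
      nth_rewrite 1 [hsig]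
      calc Sig0⁻¹ * (g Sg * g Sg) * (g Sg)⁻¹
          = Sig0⁻¹ * (g Sg * (g Sg * (g Sg)⁻¹)) := by simp only [Matrix.mul_assoc]
      _ = Sig0⁻¹ * g Sg := by rw [Matrix.mul_nonsing_inv _ hgdet, Matrix.mul_one]
    have hconj : Sig0⁻¹ * g Sg = (R⁻¹)ᵀ * (R⁻¹ * g Sg * R) * R⁻¹ := by
      rw [hRiT, ← hRsq, Matrix.mul_inv_rev]
      calc R⁻¹ * R⁻¹ * g Sg
          = R⁻¹ * (R⁻¹ * g Sg) * 1 := by rw [Matrix.mul_one, Matrix.mul_assoc]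
      _ = R⁻¹ * (R⁻¹ * g Sg) * (R * R⁻¹) := by rw [Matrix.mul_nonsing_inv _ hRdet]
      _ = R⁻¹ * (R⁻¹ * g Sg * R) * R⁻¹ := by simp only [Matrix.mul_assoc]
    have hPpd : (Sg * (g Sg)⁻¹).PosDef := by
      rw [hP, hconj]
      exact bw_posDef_conj hg2 hRidet
    refine ⟨hPpd, ?_⟩
    rw [hP]
    calc Sig0⁻¹ * g Sg * Sig0 * (Sig0⁻¹ * g Sg)
        = Sig0⁻¹ * (g Sg * (Sig0 * (Sig0⁻¹ * g Sg))) := by simp only [Matrix.mul_assoc]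
    _ = Sig0⁻¹ * (g Sg * g Sg) := by rw [Matrix.mul_nonsing_inv_cancel_left _ _ hS0det]
    _ = Sg := by rw [hg1, Matrix.nonsing_inv_mul_cancel_left _ _ hS0det]
  have hmaps' : Set.MapsTo (fun Sg => Sg * (g Sg)⁻¹ - 1)
      {Sg : Matrix (Fin d) (Fin d) ℝ | Sg.PosDef}
      {T : Matrix (Fin d) (Fin d) ℝ | T.IsSymm ∧ (1 + T).PosDef} := by
    intro Sg hSg
    obtain ⟨hPpd, _⟩ := main Sg hSg
    constructor
    · show (Sg * (g Sg)⁻¹ - 1)ᵀ = _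
      rw [transpose_sub, transpose_one, bw_transpose_of_posDef hPpd]
    · have h1 : 1 + (Sg * (g Sg)⁻¹ - 1) = Sg * (g Sg)⁻¹ := by abel
      rw [h1]
      exact hPpd
  have hright : Set.RightInvOn (fun Sg => Sg * (g Sg)⁻¹ - 1)
      (fun T => (1 + T) * Sig0 * (1 + T))
      {Sg : Matrix (Fin d) (Fin d) ℝ | Sg.PosDef} := by
    intro Sg hSg
    obtain ⟨hPpd, heq⟩ := main Sg hSg
    simp only
    have h1 : 1 + (Sg * (g Sg)⁻¹ - 1) = Sg * (g Sg)⁻¹ := by abel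
    rw [h1]
    exact heq
  -- openness
  have hopen : IsOpen {T : selfAdjoint (Matrix (Fin d) (Fin d) ℝ) |
      (1 + (T : Matrix (Fin d) (Fin d) ℝ)).PosDef} := by
    have hset : {T : selfAdjoint (Matrix (Fin d) (Fin d) ℝ) |
        (1 + (T : Matrix (Fin d) (Fin d) ℝ)).PosDef} =
        Subtype.val ⁻¹' {A : Matrix (Fin d) (Fin d) ℝ |
          ∀ x ∈ Metric.sphere (0 : Fin d → ℝ) 1, 0 < x ⬝ᵥ ((1 + A) *ᵥ x)} := by
      ext T
      have hherm : ((1 : Matrix (Fin d) (Fin d) ℝ) + ↑T).IsHermitian :=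
        Matrix.isHermitian_one.add T.property
      simp only [Set.mem_setOf_eq, Set.mem_preimage]
      exact bw_posDef_iff_sphere hherm
    rw [hset]
    exact bw_isOpen_aux.preimage continuous_subtype_val
  -- convexity
  have hconv : Convex ℝ {T : Matrix (Fin d) (Fin d) ℝ | T.IsSymm ∧ (1 + T).PosDef} := by
    intro A hA B hB a b ha hb hab
    refine ⟨?_, ?_⟩
    · show (a • A + b • B)ᵀ = _
      rw [transpose_add, transpose_smul, transpose_smul, hA.1, hB.1]
    · have h1 : (1 : Matrix (Fin d) (Fin d) ℝ) + (a • A + b • B) =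
          a • (1 + A) + b • (1 + B) := by
        rw [smul_add, smul_add]
        have h2 : a • (1 : Matrix (Fin d) (Fin d) ℝ) + b • 1 = 1 := by
          rw [← add_smul, hab, one_smul]
        calc (1 : Matrix (Fin d) (Fin d) ℝ) + (a • A + b • B)
            = a • (1:Matrix (Fin d) (Fin d) ℝ) + b • 1 + (a • A + b • B) := by rw [h2]
        _ = a • (1:Matrix (Fin d) (Fin d) ℝ) + a • A + (b • 1 + b • B) := by abel
      rw [h1]
      exact bw_posDef_convex_aux hA.2 hB.2 ha hb hab
  exact ⟨hopen, hconv, ⟨hmaps, hleft.injOn, hright.surjOn hmaps'⟩, hleft, hright⟩
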